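/- Let N ≥ 1, let u : ℝ^N → ℂ be continuously differentiable, let t ≥ 0, and define v : ℝ^N → ℂ by v(y) = (1+t)^{N/2} u((1+t)y) e^{-i(1+t)|y|²/4}. Then ∫_{ℝ^N} |∇v(y)|² dy = (1/4) ∫_{ℝ^N} |x u(x) + 2i(1+t) ∇u(x)|² dx, where both sides are Lebesgue integrals of nonnegative functions (possibly +∞); here x u(x) + 2i(1+t)∇u(x) denotes the ℂ^N-valued function whose k-th component is x_k u(x) + 2i(1+t) ∂_k u(x). -/

import Mathlib

open MeasureTheory Complex

lemma deriv_lemma {N : ℕ} (u : EuclideanSpace ℝ (Fin N) → ℂ)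
    (hu : ContDiff ℝ 1 u) (a : ℝ)
    (v : EuclideanSpace ℝ (Fin N) → ℂ)
    (hv : ∀ y, v y = ((a ^ ((N:ℝ)/2) : ℝ) : ℂ) * u (a • y) *
      Complex.exp (-(Complex.I * ((a : ℝ) : ℂ) * (‖y‖:ℂ)^2 / 4)))
    (y : EuclideanSpace ℝ (Fin N)) (k : Fin N) :
    fderiv ℝ v y (EuclideanSpace.single k 1) =
      ((a ^ ((N:ℝ)/2) : ℝ) : ℂ) * Complex.exp (-(Complex.I * (a:ℂ) * (‖y‖:ℂ)^2 / 4)) *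
        ((a:ℂ) * fderiv ℝ u (a • y) (EuclideanSpace.single k 1)
          - Complex.I * (a:ℂ) * ((y k : ℝ):ℂ) / 2 * u (a • y)) := by
  set C : ℂ := ((a ^ ((N:ℝ)/2) : ℝ) : ℂ) with hC
  set φ : EuclideanSpace ℝ (Fin N) → ℂ :=
    fun z => -((Complex.I * (a:ℂ) / 4) * ((‖z‖^2 : ℝ) : ℂ)) with hφdef
  have hφeq : ∀ z : EuclideanSpace ℝ (Fin N),
      (-(Complex.I * (a:ℂ) * (‖z‖:ℂ)^2 / 4)) = φ z := by
    intro z; simp only [hφdef]; push_cast; ring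
  have hud : Differentiable ℝ u := hu.differentiable one_ne_zero
  have h1 : HasFDerivAt (fun z : EuclideanSpace ℝ (Fin N) => a • z)
      (a • ContinuousLinearMap.id ℝ (EuclideanSpace ℝ (Fin N))) y :=
    (hasFDerivAt_id y).const_smul a
  have h2 : HasFDerivAt (fun z : EuclideanSpace ℝ (Fin N) => u (a • z))
      ((fderiv ℝ u (a • y)).comp (a • ContinuousLinearMap.id ℝ (EuclideanSpace ℝ (Fin N)))) y :=
    (hud (a • y)).hasFDerivAt.comp y h1
  have h3 : HasFDerivAt (fun z : EuclideanSpace ℝ (Fin N) => ‖z‖ ^ 2)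
      ((2:ℕ) • (innerSL ℝ y).comp (ContinuousLinearMap.id ℝ (EuclideanSpace ℝ (Fin N)))) y :=
    (hasFDerivAt_id y).norm_sq
  have h4 : HasFDerivAt (fun z : EuclideanSpace ℝ (Fin N) => ((‖z‖^2 : ℝ) : ℂ))
      (Complex.ofRealCLM.comp ((2:ℕ) • (innerSL ℝ y).comp
        (ContinuousLinearMap.id ℝ (EuclideanSpace ℝ (Fin N))))) y :=
    Complex.ofRealCLM.hasFDerivAt.comp y h3
  have hφ : HasFDerivAt φ
      (-((Complex.I * (a:ℂ) / 4) • (Complex.ofRealCLM.comp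
        ((2:ℕ) • (innerSL ℝ y).comp (ContinuousLinearMap.id ℝ (EuclideanSpace ℝ (Fin N))))))) y :=
    (h4.const_mul _).neg
  have hexp := hφ.cexp
  have hmul := h2.mul hexp
  have hCmul := hmul.const_mul C
  have hveq : v = fun z => C * (u (a • z) * Complex.exp (φ z)) := by
    funext z
    rw [hv z, hφeq z, mul_assoc]
  rw [hveq]
  change fderiv ℝ (fun y => C * ((fun z => u (a • z)) * fun x => Complex.exp (φ x)) y) y _ = _
  rw [hCmul.fderiv]
  simp only [ContinuousLinearMap.smul_apply, ContinuousLinearMap.add_apply,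
    ContinuousLinearMap.comp_apply, ContinuousLinearMap.coe_smul', Pi.smul_apply,
    ContinuousLinearMap.id_apply, ContinuousLinearMap.neg_apply, Complex.ofRealCLM_apply,
    innerSL_apply_apply, ContinuousLinearMap.map_smul, Complex.real_smul, smul_eq_mul]
  rw [EuclideanSpace.inner_single_right]
  rw [hφeq y]
  simp only [conj_trivial, mul_one, one_mul]
  push_cast
  ring

/-- `∫ |∇v|² = (1/4) ∫ |x u + 2i(1+t)∇u|²` for the spatial
pseudoconformal transform `v` of `u` at time `t`. -/
theorem stmt3 {N : ℕ} (hN : 1 ≤ N) (u : EuclideanSpace ℝ (Fin N) → ℂ)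
    (hu : ContDiff ℝ 1 u) (t : ℝ) (ht : 0 ≤ t)
    (v : EuclideanSpace ℝ (Fin N) → ℂ)
    (hv : ∀ y, v y = (((1 + t) ^ ((N:ℝ)/2) : ℝ) : ℂ) * u ((1 + t) • y) *
      Complex.exp (-(Complex.I * ((1 + t : ℝ) : ℂ) * (‖y‖:ℂ)^2 / 4))) :
    ∫⁻ y, ENNReal.ofReal (∑ k : Fin N,
        ‖fderiv ℝ v y (EuclideanSpace.single k 1)‖ ^ 2) =
    ENNReal.ofReal (1/4) * ∫⁻ x, ENNReal.ofReal (∑ k : Fin N,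
        ‖((x k : ℝ) : ℂ) * u x +
          2 * Complex.I * ((1 + t : ℝ) : ℂ) *
            fderiv ℝ u x (EuclideanSpace.single k 1)‖ ^ 2) := by
  set a : ℝ := 1 + t with ha_def
  have ha : 0 < a := by positivity
  set F : EuclideanSpace ℝ (Fin N) → ℝ := fun x => ∑ k : Fin N,
    ‖((x k : ℝ) : ℂ) * u x +
      2 * Complex.I * ((a : ℝ) : ℂ) * fderiv ℝ u x (EuclideanSpace.single k 1)‖ ^ 2 with hF
  -- squared norm of the constant
  have hCsq : (a ^ ((N:ℝ)/2)) ^ 2 = a ^ N := by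
    rw [← Real.rpow_natCast (a ^ ((N:ℝ)/2)) 2, ← Real.rpow_mul ha.le]
    norm_num
  -- pointwise identity
  have hpt : ∀ y, (∑ k : Fin N,
      ‖fderiv ℝ v y (EuclideanSpace.single k 1)‖ ^ 2) =
      a ^ N * (4⁻¹ * F (a • y)) := by
    intro y
    rw [hF]
    simp only [Finset.mul_sum]
    refine Finset.sum_congr rfl fun k _ => ?_
    rw [deriv_lemma u hu a v hv y k]
    have hsmulk : ((a • y : EuclideanSpace ℝ (Fin N)) k : ℝ) = a * y k := rfl
    have h2I : (((a • y : EuclideanSpace ℝ (Fin N)) k : ℝ) : ℂ) * u (a • y) +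
        2 * Complex.I * ((a:ℝ):ℂ) * fderiv ℝ u (a • y) (EuclideanSpace.single k 1) =
        (2 * Complex.I) * ((a:ℂ) * fderiv ℝ u (a • y) (EuclideanSpace.single k 1)
          - Complex.I * (a:ℂ) * ((y k : ℝ):ℂ) / 2 * u (a • y)) := by
      rw [hsmulk]; push_cast
      linear_combination (((a:ℝ):ℂ) * ((y k : ℝ):ℂ) * u (a • y)) * Complex.I_sq
    rw [h2I]
    simp only [norm_mul]
    have habsexp : ‖Complex.exp (-(Complex.I * (a:ℂ) * (‖y‖:ℂ)^2 / 4))‖ = 1 := by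
      have : (-(Complex.I * (a:ℂ) * (‖y‖:ℂ)^2 / 4)) =
          (((-(a * ‖y‖^2 / 4)) : ℝ) : ℂ) * Complex.I := by push_cast; ring
      rw [this, Complex.norm_exp_ofReal_mul_I]
    rw [habsexp, Complex.norm_real, Real.norm_eq_abs, Complex.norm_two, Complex.norm_I,
      _root_.abs_of_nonneg (Real.rpow_nonneg ha.le _)]
    rw [mul_one, mul_one, mul_pow, mul_pow, hCsq]
    ring
  -- rewrite LHS integrand
  rw [lintegral_congr (fun y => by rw [hpt y])]
  have h4 : (0:ℝ) ≤ 4⁻¹ := by norm_num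
  simp_rw [ENNReal.ofReal_mul (pow_nonneg ha.le N), ENNReal.ofReal_mul h4, ← mul_assoc]
  rw [lintegral_const_mul' _ _ (by finiteness)]
  -- change of variables
  have haN : (0:ℝ) < a ^ N := pow_pos ha N
  have hmap : ∫⁻ y, ENNReal.ofReal (F (a • y)) =
      ENNReal.ofReal ((a ^ N)⁻¹) * ∫⁻ x, ENNReal.ofReal (F x) := by
    have hunit : IsUnit a := isUnit_iff_ne_zero.2 ha.ne'
    let e : EuclideanSpace ℝ (Fin N) ≃ᵐ EuclideanSpace ℝ (Fin N) :=
      (Homeomorph.smul hunit.unit (α := EuclideanSpace ℝ (Fin N))).toMeasurableEquiv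
    have h1 : ∫⁻ y, ENNReal.ofReal (F (a • y)) =
        ∫⁻ x, ENNReal.ofReal (F x) ∂(Measure.map e volume) := by
      rw [lintegral_map_equiv]
      rfl
    rw [h1]
    have h2 : Measure.map e (volume : Measure (EuclideanSpace ℝ (Fin N))) =
        Measure.map (fun x : EuclideanSpace ℝ (Fin N) => a • x) volume := rfl
    rw [h2, Measure.map_addHaar_smul volume ha.ne', lintegral_smul_measure,
      finrank_euclideanSpace_fin, _root_.abs_of_nonneg (inv_nonneg.2 haN.le), smul_eq_mul]
  rw [hmap, ← mul_assoc]
  congr 1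
  rw [← ENNReal.ofReal_mul (by positivity), ← ENNReal.ofReal_mul (by positivity)]
  rw [mul_comm (a ^ N) 4⁻¹, mul_assoc, mul_inv_cancel₀ haN.ne']
  norm_num
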